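/- The set of finite infixes of the Thue–Morse sequence is downwards closed for the infix relation, is well-quasi-ordered by the infix relation, and is not a bounded language. -/

import Mathlib

/-- The `p`-fold concatenation of the word `x`. -/
def wpow {A : Type*} (x : List A) (p : ℕ) : List A := (List.replicate p x).flatten

/-- A finite word `u` is an infix of the infinite word `w : ℕ → A`. -/
def IsInfInfix {A : Type*} (w : ℕ → A) (u : List A) : Prop :=
  ∃ i : ℕ, u = (List.range u.length).map fun j => w (i + j)

/-- A subset `L` of words is well-quasi-ordered by the relation `r`. -/
def IsWqoOn {A : Type*} (L : Set (List A)) (r : List A → List A → Prop) : Prop :=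
  ∀ f : ℕ → List A, (∀ n, f n ∈ L) → ∃ i j, i < j ∧ r (f i) (f j)

/-- A language is bounded if it is contained in `w₁* ⋯ w_n*` for some words `wᵢ`. -/
def IsBoundedLang {A : Type*} (L : Set (List A)) : Prop :=
  ∃ (n : ℕ) (w : Fin n → List A), ∀ u ∈ L, ∃ c : Fin n → ℕ,
    u = (List.ofFn fun i : Fin n => wpow (w i) (c i)).flatten

/-- The Thue–Morse sequence: `thueMorse n` is the parity of the number of ones in
the binary expansion of `n`. -/
def thueMorse (n : ℕ) : Bool := decide (Odd ((Nat.digits 2 n).count 1))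

lemma tm_two_mul (n : ℕ) : thueMorse (2*n) = thueMorse n := by
  rcases Nat.eq_zero_or_pos n with h | h
  · simp [h]
  · unfold thueMorse
    rw [Nat.digits_def' (by norm_num) (by omega)]
    simp [Nat.mul_div_cancel_left _ (by norm_num : 0 < 2), Nat.mul_mod_right]

lemma tm_two_mul_add_one (n : ℕ) : thueMorse (2*n+1) = !thueMorse n := by
  unfold thueMorse
  rw [Nat.digits_def' (by norm_num) (by omega)]
  have h1 : (2*n+1) % 2 = 1 := by omega
  have h2 : (2*n+1) / 2 = n := by omega
  rw [h1, h2, List.count_cons]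
  by_cases h : Odd ((Nat.digits 2 n).count 1) <;>
    simp [h, Nat.odd_add_one, ← Nat.not_odd_iff_even]

lemma noTriple (k : ℕ) : ¬ (thueMorse k = thueMorse (k+1) ∧ thueMorse (k+1) = thueMorse (k+2)) := by
  rintro ⟨h1, h2⟩
  rcases Nat.even_or_odd k with ⟨m, hm⟩ | ⟨m, hm⟩
  · subst hm
    rw [show m+m = 2*m by ring] at h1
    rw [tm_two_mul, tm_two_mul_add_one] at h1
    simp at h1
  · subst hm
    rw [show 2*m+1+1 = 2*(m+1) by ring, show 2*m+1+2 = 2*(m+1)+1 by ring] at h2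
    rw [tm_two_mul, tm_two_mul_add_one] at h2
    simp at h2

lemma tm_key : ∀ (k m r : ℕ), r < 2^k → thueMorse (2^k * m + r) = xor (thueMorse m) (thueMorse r) := by
  intro k
  induction k with
  | zero => intro m r hr; interval_cases r; simp [thueMorse]
  | succ k ih =>
    intro m r hr
    have hp : 2^(k+1) = 2*2^k := by rw [pow_succ]; ring
    have hr2 : r / 2 < 2^k := by omega
    rcases Nat.even_or_odd r with ⟨s, hs⟩ | ⟨s, hs⟩
    · have : 2^(k+1) * m + r = 2 * (2^k * m + s) := by subst hs; rw [pow_succ]; ring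
      rw [this, tm_two_mul, ih m s (by omega), show r = 2*s by omega, tm_two_mul]
    · have : 2^(k+1) * m + r = 2 * (2^k * m + s) + 1 := by subst hs; rw [pow_succ]; ring
      rw [this, tm_two_mul_add_one, ih m s (by omega), hs, tm_two_mul_add_one]
      cases thueMorse m <;> cases thueMorse s <;> rfl

/-- The factor of the Thue–Morse word of length `n` starting at position `i`. -/
def tmFactor (i n : ℕ) : List Bool := (List.range n).map fun j => thueMorse (i + j)

lemma tmFactor_length (i n : ℕ) : (tmFactor i n).length = n := by simp [tmFactor]

lemma tmFactor_append (i a b : ℕ) : tmFactor i (a+b) = tmFactor i a ++ tmFactor (i+a) b := by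
  unfold tmFactor
  rw [List.range_add, List.map_append, List.map_map]
  congr 1
  apply List.map_congr_left
  intro x _
  simp [Function.comp]
  ring_nf

lemma tmFactor_infix {i n i' n' : ℕ} (h1 : i' ≤ i) (h2 : i + n ≤ i' + n') :
    tmFactor i n <:+: tmFactor i' n' := by
  have key : ∀ i a n b, tmFactor (i+a) n <:+: tmFactor i (a+(n+b)) := by
    intro i a n b
    rw [tmFactor_append, tmFactor_append]
    exact ⟨tmFactor i a, tmFactor (i+a+n) b, by rw [List.append_assoc]⟩
  have := key i' (i-i') n (i'+n'-(i+n))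
  rwa [show i' + (i-i') = i by omega,
    show (i-i') + (n + (i'+n'-(i+n))) = n' by omega] at this

lemma noFourth : ∀ p, 1 ≤ p → ∀ i, ¬ (∀ j < 3*p, thueMorse (i+j) = thueMorse (i+j+p)) := by
  intro p
  induction p using Nat.strong_induction_on with
  | _ p ih =>
    intro hp i H
    rcases Nat.even_or_odd p with ⟨q, hq⟩ | ⟨q, hq⟩
    · -- p = 2q
      have hq1 : 1 ≤ q := by omega
      apply ih q (by omega) hq1 ((i+1)/2)
      intro j hj
      have h1 : 2*((i+1)/2 + j) - i < 3*p := by omega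
      have h2 : i ≤ 2*((i+1)/2 + j) := by omega
      have := H (2*((i+1)/2+j) - i) h1
      rw [show i + (2*((i+1)/2+j) - i) = 2*((i+1)/2+j) by omega] at this
      rw [show 2*((i+1)/2+j) + p = 2*((i+1)/2+j+q) by omega] at this
      rw [tm_two_mul, tm_two_mul] at this
      rw [show (i+1)/2 + j + q = (i+1)/2+j+q from rfl]
      exact this
    · -- p = 2q+1
      rcases Nat.eq_zero_or_pos q with h0 | h0
      · -- p = 1
        apply noTriple i
        have e1 := H 0 (by omega)
        have e2 := H 1 (by omega)
        simp only [Nat.add_zero] at e1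
        rw [show i+p = i+1 by omega] at e1
        rw [show i+1+p = i+2 by omega] at e2
        exact ⟨e1, e2⟩
      · -- p = 2q+1 ≥ 3
        apply noTriple ((i+1)/2 + q)
        have key : ∀ m, i ≤ 2*m → 2*m+1 - i < 3*p →
            thueMorse (m+q) = thueMorse (m+q+1) := by
          intro m hm hm'
          have e1 := H (2*m - i) (by omega)
          rw [show i + (2*m-i) = 2*m by omega, show 2*m+p = 2*(m+q)+1 by omega,
            tm_two_mul, tm_two_mul_add_one] at e1
          have e2 := H (2*m+1 - i) (by omega)
          rw [show i + (2*m+1-i) = 2*m+1 by omega, show 2*m+1+p = 2*(m+q+1) by omega,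
            tm_two_mul_add_one, tm_two_mul] at e2
          rw [← e2, e1, Bool.not_not]
        have k1 := key ((i+1)/2) (by omega) (by omega)
        have k2 := key ((i+1)/2 + 1) (by omega) (by omega)
        constructor
        · exact k1
        · rw [show (i+1)/2 + q + 1 = (i+1)/2 + 1 + q by omega] at *
          rw [show (i+1)/2 + q + 2 = (i+1)/2 + 1 + q + 1 by omega]
          exact k2

lemma tmFactor_block_false {k m : ℕ} (h : thueMorse m = false) :
    tmFactor (2^k * m) (2^k) = tmFactor 0 (2^k) := by
  unfold tmFactor
  apply List.map_congr_left
  intro r hr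
  rw [List.mem_range] at hr
  rw [tm_key k m r hr, h, Nat.zero_add]
  cases thueMorse r <;> rfl

lemma tm_recur (k i n : ℕ) (h : 2^(k+2) ≤ n) : tmFactor 0 (2^k) <:+: tmFactor i n := by
  set K := 2^k with hK
  set m' := i / (2*K) + 1 with hm'
  set a := 2*K*m' with ha
  have hK1 : 1 ≤ K := Nat.one_le_two_pow
  have hdm := Nat.div_add_mod i (2*K)
  have hmod := Nat.mod_lt i (y := 2*K) (by omega)
  have ha1 : i ≤ a := by
    have : 2*K*m' = 2*K*(i/(2*K)) + 2*K := by ring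
    omega
  have ha2 : a + 2*K ≤ i + n := by
    have h4 : 2^(k+2) = 4*K := by rw [hK, pow_succ, pow_succ]; ring
    have : 2*K*m' = 2*K*(i/(2*K)) + 2*K := by ring
    omega
  have hmain : tmFactor 0 K <:+: tmFactor a (2*K) := by
    rw [show 2*K = K + K by ring, tmFactor_append]
    cases hc : thueMorse m' with
    | false =>
      have : tmFactor a K = tmFactor 0 K := by
        rw [show a = 2^k * (2*m') by rw [ha, hK]; ring]
        rw [hK]
        apply tmFactor_block_false
        rw [tm_two_mul, hc]
      rw [this]
      exact (List.prefix_append _ _).isInfix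
    | true =>
      have : tmFactor (a + K) K = tmFactor 0 K := by
        rw [show a + K = 2^k * (2*m'+1) by rw [ha, hK]; ring]
        rw [hK]
        apply tmFactor_block_false
        rw [tm_two_mul_add_one, hc]
        rfl
      rw [this]
      exact (List.suffix_append _ _).isInfix
  exact hmain.trans (tmFactor_infix ha1 ha2)

lemma wpow_add {A : Type*} (x : List A) (a b : ℕ) :
    wpow x (a+b) = wpow x a ++ wpow x b := by
  unfold wpow
  rw [List.replicate_add, List.flatten_append]

lemma wpow_one {A : Type*} (x : List A) : wpow x 1 = x := by
  simp [wpow]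

lemma length_wpow {A : Type*} (x : List A) (p : ℕ) : (wpow x p).length = p * x.length := by
  induction p with
  | zero => simp [wpow]
  | succ p ih =>
    rw [wpow_add x p 1, List.length_append, ih, wpow_one]
    ring

lemma mem_L (i n : ℕ) : ∃ j : ℕ, tmFactor i n =
    (List.range (tmFactor i n).length).map fun j' => thueMorse (j + j') :=
  ⟨i, by rw [tmFactor_length]; rfl⟩

lemma infix_factor {u : List Bool} {i n : ℕ} (h : u <:+: tmFactor i n) :
    ∃ j, u = tmFactor j u.length := by
  obtain ⟨s, t', hst⟩ := h
  refine ⟨i + s.length, ?_⟩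
  have hn : n = s.length + (u.length + t'.length) := by
    have := congrArg List.length hst
    simp [tmFactor_length] at this
    omega
  rw [hn, tmFactor_append, tmFactor_append, List.append_assoc] at hst
  obtain ⟨h1, h2⟩ := List.append_inj hst (tmFactor_length _ _).symm
  exact (List.append_inj h2 (tmFactor_length _ _).symm).1

lemma wpow_period {x : List Bool} (hx : x ≠ []) {i n : ℕ}
    (h : wpow x 4 <:+: tmFactor i n) : False := by
  obtain ⟨j, hj⟩ := infix_factor h
  set p := x.length with hp
  have hp1 : 1 ≤ p := List.length_pos_iff.mpr hx
  apply noFourth p hp1 j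
  intro j' hj'
  have hlen : (wpow x 4).length = 4*p := by rw [length_wpow]
  have hd : (wpow x 4).drop p = wpow x 3 := by
    rw [show (4:ℕ) = 1+3 by rfl, wpow_add, wpow_one, hp]
    exact List.drop_left
  have ht : (wpow x 4).take (3*p) = wpow x 3 := by
    rw [show (4:ℕ) = 3+1 by rfl, wpow_add x 3 1, wpow_one]
    have := List.take_left (l₁ := wpow x 3) (l₂ := x)
    rwa [length_wpow, ← hp] at this
  have e1 : (wpow x 4)[j']? = (wpow x 4)[p + j']? := by
    calc (wpow x 4)[j']? = ((wpow x 4).take (3*p))[j']? := by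
          rw [List.getElem?_take, if_pos hj']
      _ = ((wpow x 4).drop p)[j']? := by rw [ht, hd]
      _ = (wpow x 4)[p + j']? := List.getElem?_drop
  rw [hj, hlen] at e1
  have eget : ∀ m, m < 4*p → (tmFactor j (4*p))[m]? = some (thueMorse (j+m)) := by
    intro m hm
    unfold tmFactor
    rw [List.getElem?_map, List.getElem?_range hm, Option.map_some]
  rw [eget j' (by omega), eget (p + j') (by omega)] at e1
  rw [show j + (p + j') = j + j' + p by ring] at e1
  exact Option.some.inj e1

/-- The set of finite infixes of the Thue–Morse sequence is
downwards closed for the infix relation, well-quasi-ordered by the infix relation,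
and not a bounded language. -/
theorem thueMorse_infixes_downclosed_wqo_not_bounded :
    (∀ v ∈ {u | IsInfInfix thueMorse u}, ∀ u : List Bool, u <:+: v →
      u ∈ {u | IsInfInfix thueMorse u}) ∧
    IsWqoOn {u | IsInfInfix thueMorse u} (· <:+: ·) ∧
    ¬ IsBoundedLang {u | IsInfInfix thueMorse u} := by
  refine ⟨?_, ?_, ?_⟩
  · -- downward closed
    intro v hv u hu
    obtain ⟨i, hv'⟩ := hv
    have hv'' : v = tmFactor i v.length := hv'
    rw [hv''] at hu
    obtain ⟨j, hj⟩ := infix_factor hu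
    exact ⟨j, hj⟩
  · -- WQO
    intro f hf
    obtain ⟨i₀, h0⟩ := hf 0
    have h0' : f 0 = tmFactor i₀ (f 0).length := h0
    set k := i₀ + (f 0).length with hk
    have hpre : f 0 <:+: tmFactor 0 (2^k) := by
      rw [h0']
      apply tmFactor_infix (Nat.zero_le _)
      have := Nat.lt_two_pow_self (n := k)
      omega
    by_cases hb : ∃ j, 0 < j ∧ 2^(k+2) ≤ (f j).length
    · obtain ⟨j, hj0, hjl⟩ := hb
      obtain ⟨i', h1⟩ := hf j
      have h1' : f j = tmFactor i' (f j).length := h1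
      refine ⟨0, j, hj0, ?_⟩
      rw [h1']
      exact hpre.trans (tm_recur k i' _ hjl)
    · push_neg at hb
      haveI := (List.finite_length_lt Bool (2^(k+2))).to_subtype
      obtain ⟨a, b, hab, he⟩ := Finite.exists_ne_map_eq_of_infinite
        (fun j : ℕ => (⟨f (j+1), hb (j+1) (Nat.succ_pos j)⟩ :
          {l : List Bool | l.length < 2^(k+2)}))
      have he' : f (a+1) = f (b+1) := congrArg Subtype.val he
      rcases Nat.lt_or_ge a b with hlt | hge
      · exact ⟨a+1, b+1, by omega, by rw [he']⟩
      · exact ⟨b+1, a+1, by omega, by rw [he']⟩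
  · -- not bounded
    rintro ⟨n, w, hw⟩
    set S := ∑ i : Fin n, (w i).length with hS
    obtain ⟨c, hc⟩ := hw (tmFactor 0 (3*S+1)) (mem_L 0 (3*S+1))
    have hlen : 3*S+1 = ∑ i : Fin n, c i * (w i).length := by
      have h := congrArg List.length hc
      rw [tmFactor_length, List.length_flatten, List.map_ofFn, List.sum_ofFn] at h
      simpa [Function.comp, length_wpow] using h
    have hlt : ∑ i : Fin n, 3 * (w i).length < ∑ i : Fin n, c i * (w i).length := by
      rw [← hlen, ← Finset.mul_sum, ← hS]
      omega
    obtain ⟨i, -, hi⟩ := Finset.exists_lt_of_sum_lt hlt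
    have hw0 : w i ≠ [] := by
      intro h
      rw [h] at hi
      simp at hi
    have hc4 : 4 ≤ c i := by
      by_contra hc4
      have : c i * (w i).length ≤ 3 * (w i).length := Nat.mul_le_mul_right _ (by omega)
      omega
    apply wpow_period hw0 (i := 0) (n := 3*S+1)
    have h1 : wpow (w i) 4 <:+: wpow (w i) (c i) := by
      rw [show c i = 4 + (c i - 4) by omega, wpow_add]
      exact (List.prefix_append _ _).isInfix
    have h2 : wpow (w i) (c i) <:+: tmFactor 0 (3*S+1) := by
      rw [hc]
      exact List.infix_of_mem_flatten (List.mem_ofFn.mpr ⟨i, rfl⟩)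
    exact h1.trans h2
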